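/- Let n, m ≥ 0 and d ≥ 3. Let Z ⊆ ℙ^n be a reduced zero-dimensional subscheme with |Z| ≥ m + 2 whose projective hull is m-dimensional. Then the kernel of the restriction map H^0(ℙ^n, O(d)) → H^0(N(Z), O(d)) has codimension at least (m+1)(n+1) + n − 1 in H^0(ℙ^n, O(d)). -/

import Mathlib

/-- The 1-jet of a polynomial at a point `z`: its value and all first partial
derivatives at `z`. -/
noncomputable def jetL (F : Type*) [Field F] (n : ℕ) (z : Fin (n + 1) → F) :
    MvPolynomial (Fin (n + 1)) F →ₗ[F] F × (Fin (n + 1) → F) :=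
  LinearMap.prod (MvPolynomial.aeval z).toLinearMap
    (LinearMap.pi fun k =>
      (MvPolynomial.aeval z).toLinearMap.comp (MvPolynomial.pderiv k).toLinearMap)

/-- The restriction map `H^0(ℙ^n, O(d)) → H^0(N(Z), O(d))` to the first infinitesimal
neighbourhood of a finite reduced set of points `Z`, given by 1-jets; its kernel is
`H^0(ℙ^n, I_Z^2(d))`. -/
noncomputable def jetMap (F : Type*) [Field F] (n d : ℕ)
    (Z : Finset (Fin (n + 1) → F)) :
    ↥(MvPolynomial.homogeneousSubmodule (Fin (n + 1)) F d) →ₗ[F]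
      ({x // x ∈ Z} → F × (Fin (n + 1) → F)) :=
  LinearMap.pi fun w => (jetL F n (w : Fin (n + 1) → F)).comp (Submodule.subtype _)

section Aux

open MvPolynomial Finset

variable {F : Type*} [Field F] {n : ℕ}

/-- The linear polynomial attached to a linear functional. -/
noncomputable def linPoly (f : (Fin (n+1) → F) →ₗ[F] F) : MvPolynomial (Fin (n+1)) F :=
  ∑ k, C (f (Pi.single k 1)) * X k

lemma linPoly_homog (f : (Fin (n+1) → F) →ₗ[F] F) : (linPoly f).IsHomogeneous 1 :=
  IsHomogeneous.sum _ _ _ fun k _ => isHomogeneous_C_mul_X _ _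

lemma lin_sum (f : (Fin (n+1) → F) →ₗ[F] F) (v : Fin (n+1) → F) :
    ∑ k, v k * f (Pi.single k 1) = f v := by
  have hv : v = ∑ k, Pi.single k (v k) := (Finset.univ_sum_single v).symm
  conv_rhs => rw [hv, map_sum]
  refine Finset.sum_congr rfl fun k _ => ?_
  have : Pi.single k (v k) = v k • (Pi.single k (1:F) : Fin (n+1) → F) := by
    rw [← Pi.single_smul, smul_eq_mul, mul_one]
  rw [this, map_smul, smul_eq_mul]

lemma aeval_linPoly (f : (Fin (n+1) → F) →ₗ[F] F) (z : Fin (n+1) → F) :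
    aeval z (linPoly f) = f z := by
  rw [linPoly, map_sum, ← lin_sum f z]
  refine Finset.sum_congr rfl fun k _ => ?_
  simp [mul_comm]

lemma pderiv_linPoly (f : (Fin (n+1) → F) →ₗ[F] F) (k : Fin (n+1)) :
    pderiv k (linPoly f) = C (f (Pi.single k 1)) := by
  rw [linPoly, map_sum, Finset.sum_eq_single k]
  · rw [pderiv_C_mul, pderiv_X_self, mul_one]
  · intro j _ hj
    rw [pderiv_C_mul, pderiv_X_of_ne hj, mul_zero]
  · simp

/-- directional derivative evaluated at a point, as a linear functional -/
noncomputable def jet1 (z v : Fin (n+1) → F) : MvPolynomial (Fin (n+1)) F →ₗ[F] F :=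
  ∑ k, v k • ((aeval z).toLinearMap.comp (pderiv k).toLinearMap)

lemma jet1_apply (z v : Fin (n+1) → F) (P : MvPolynomial (Fin (n+1)) F) :
    jet1 z v P = ∑ k, v k * aeval z (pderiv k P) := by
  simp [jet1, LinearMap.sum_apply]

lemma jet1_linPoly (z v : Fin (n+1) → F) (f : (Fin (n+1) → F) →ₗ[F] F) :
    jet1 z v (linPoly f) = f v := by
  rw [jet1_apply, ← lin_sum f v]
  refine Finset.sum_congr rfl fun k _ => ?_
  rw [pderiv_linPoly]
  simp

lemma jet1_mul (z v : Fin (n+1) → F) (P Q : MvPolynomial (Fin (n+1)) F) :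
    jet1 z v (P * Q) = jet1 z v P * aeval z Q + aeval z P * jet1 z v Q := by
  simp only [jet1_apply, pderiv_mul, map_add, map_mul, mul_add, Finset.sum_add_distrib,
    Finset.sum_mul, Finset.mul_sum]
  congr 1
  · exact Finset.sum_congr rfl fun k _ => by ring
  · exact Finset.sum_congr rfl fun k _ => by ring

lemma jet1_pow (z v : Fin (n+1) → F) (P : MvPolynomial (Fin (n+1)) F) (e : ℕ) :
    jet1 z v (P ^ e) = (e : F) * (aeval z P) ^ (e - 1) * jet1 z v P := by
  induction e with
  | zero => simp [jet1_apply]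
  | succ e ih =>
    rw [pow_succ, jet1_mul, ih]
    cases e with
    | zero => simp
    | succ e' =>
      rw [Nat.add_sub_cancel, Nat.add_sub_cancel]
      simp only [map_pow, map_mul]
      push_cast
      ring

/-- evaluation functional on jets -/
noncomputable def muE {Z : Finset (Fin (n+1) → F)}
    (zh : {x // x ∈ Z}) : ({x // x ∈ Z} → F × (Fin (n+1) → F)) →ₗ[F] F :=
  (LinearMap.fst F F _).comp (LinearMap.proj zh)

/-- directional-derivative functional on jets -/
noncomputable def muJ {Z : Finset (Fin (n+1) → F)}
    (zh : {x // x ∈ Z}) (v : Fin (n+1) → F) :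
    ({x // x ∈ Z} → F × (Fin (n+1) → F)) →ₗ[F] F :=
  (∑ k, v k • (LinearMap.proj k).comp (LinearMap.snd F F (Fin (n+1) → F))).comp
    (LinearMap.proj zh)

lemma muE_jet {d : ℕ} {Z : Finset (Fin (n+1) → F)}
    (zh : {x // x ∈ Z}) (P : ↥(MvPolynomial.homogeneousSubmodule (Fin (n + 1)) F d)) :
    muE zh (jetMap F n d Z P) = aeval (zh : Fin (n+1) → F) (P : MvPolynomial (Fin (n+1)) F) := by
  simp [muE, jetMap, jetL]

lemma muJ_jet {d : ℕ} {Z : Finset (Fin (n+1) → F)}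
    (zh : {x // x ∈ Z}) (v : Fin (n+1) → F)
    (P : ↥(MvPolynomial.homogeneousSubmodule (Fin (n + 1)) F d)) :
    muJ zh v (jetMap F n d Z P) =
      jet1 (zh : Fin (n+1) → F) v (P : MvPolynomial (Fin (n+1)) F) := by
  simp [muJ, jetMap, jetL, jet1, LinearMap.sum_apply]

end Aux

open MvPolynomial Finset

set_option maxHeartbeats 1600000
set_option synthInstance.maxHeartbeats 400000

/-- Let `d ≥ 3` and let `Z ⊆ ℙ^n` be a reduced zero-dimensional
subscheme (nonzero, pairwise non-proportional vectors) with `|Z| ≥ m + 2` whose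
projective hull is `m`-dimensional (i.e. the span of the representing vectors has
dimension `m + 1`).  Then the kernel of the restriction map
`H^0(ℙ^n, O(d)) → H^0(N(Z), O(d))` has codimension at least `(m+1)(n+1) + n − 1`. -/
theorem stmt_12 {F : Type*} [Field F] (n m d : ℕ) (hd : 3 ≤ d)
    (Z : Finset (Fin (n + 1) → F))
    (hZ0 : ∀ z ∈ Z, z ≠ 0)
    (hZd : ∀ z ∈ Z, ∀ w ∈ Z, z ≠ w → ∀ c : F, c • z ≠ w)
    (hcard : m + 2 ≤ Z.card)
    (hhull : Module.finrank F
      (Submodule.span F (↑Z : Set (Fin (n + 1) → F))) = m + 1) :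
    (m + 1) * (n + 1) + n - 1 ≤
      Module.finrank F
        (↥(MvPolynomial.homogeneousSubmodule (Fin (n + 1)) F d) ⧸
          LinearMap.ker (jetMap F n d Z)) := by
  classical
  have hd1 : d - 1 ≠ 0 := by omega
  have hd2 : d - 2 ≠ 0 := by omega
  have hd11 : d - 1 - 1 ≠ 0 := by omega
  -- extract a spanning linearly independent subset s of Z
  obtain ⟨s, hsZ, hspan, hsli⟩ := exists_linearIndependent F ((Z : Set (Fin (n + 1) → F)))
  haveI : Fintype s := (Set.Finite.subset Z.finite_toSet hsZ).fintype
  have hscard : s.toFinset.card = m + 1 := by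
    rw [← finrank_span_set_eq_card hsli]
    · rw [hspan, hhull]
  -- extend to a basis
  set t := (show LinearIndepOn F id s from hsli).extend (Set.subset_univ s) with ht
  have hst : s ⊆ t := (show LinearIndepOn F id s from hsli).subset_extend _
  set B : Module.Basis t F (Fin (n+1) → F) := Module.Basis.extend (show LinearIndepOn F id s from hsli) with hB
  haveI : Fintype t := FiniteDimensional.fintypeBasisIndex B
  have hBcoe : ∀ j : t, B j = (j : Fin (n.succ) → F) := fun j => by
    rw [hB]
    exact congrFun (Module.Basis.coe_extend _) j
  have htcard : Fintype.card t = n + 1 := by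
    have h1 := Module.finrank_eq_card_basis B
    rw [Module.finrank_pi, Fintype.card_fin] at h1
    omega
  -- the extra point w
  have hsZ' : s.toFinset ⊆ Z := by
    intro x hx
    have : x ∈ s := by simpa using hx
    exact_mod_cast hsZ this
  obtain ⟨w, hwZ, hws⟩ : ∃ w ∈ Z, w ∉ s := by
    obtain ⟨x, hx1, hx2⟩ := Finset.exists_of_ssubset
      (HasSubset.Subset.ssubset_of_ne hsZ' (by
        intro h
        rw [h] at hscard
        omega))
    exact ⟨x, hx1, by simpa using hx2⟩
  have hw0 : w ≠ 0 := hZ0 w hwZ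
  set r := B.repr w with hr
  -- the support of the representation of w lies in s
  have hsupp : ∀ j : t, j ∈ r.support → (j : Fin (n+1) → F) ∈ s := by
    intro j hj
    have hw_mem : w ∈ Submodule.span F s := by
      rw [hspan]
      exact Submodule.subset_span (by exact_mod_cast hwZ)
    have himg : (⇑B '' (Subtype.val ⁻¹' s) : Set (Fin (n+1) → F)) = s := by
      rw [hB, Module.Basis.coe_extend, Subtype.image_preimage_coe,
        Set.inter_eq_self_of_subset_right hst]
    have := (Module.Basis.mem_span_image B (s := (Subtype.val ⁻¹' s))).mp (by rwa [himg])
    exact this hj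
  -- two distinct support elements
  have hcard2 : 1 < r.support.card := by
    by_contra h
    push_neg at h
    have hsne : s.toFinset.Nonempty := Finset.card_pos.mp (by omega)
    obtain ⟨x0, hx0⟩ := hsne
    haveI : Nonempty t := ⟨⟨x0, hst (Set.mem_toFinset.mp hx0)⟩⟩
    obtain ⟨j, c, hjc⟩ := Finsupp.card_support_le_one'.mp h
    have hwj : w = c • (j : Fin (n+1) → F) := by
      have h2 := B.linearCombination_repr w
      rw [← hr, hjc, Finsupp.linearCombination_single] at h2
      rw [← h2, hBcoe]
    have hc0 : c ≠ 0 := by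
      intro hc
      rw [hc, zero_smul] at hwj
      exact hw0 hwj
    have hjsupp : j ∈ r.support := by
      rw [hjc]
      simp [Finsupp.single_eq_same, hc0]
    have hjs : (j : Fin (n+1) → F) ∈ s := hsupp j hjsupp
    have hjZ : (j : Fin (n+1) → F) ∈ Z := by exact_mod_cast hsZ hjs
    have hjw : (j : Fin (n+1) → F) ≠ w := fun h => hws (h ▸ hjs)
    exact hZd _ hjZ w hwZ hjw c hwj.symm
  obtain ⟨a, ha, b, hb, hab⟩ := Finset.one_lt_card.mp hcard2
  have hra : r a ≠ 0 := Finsupp.mem_support_iff.mp ha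
  have hrb : r b ≠ 0 := Finsupp.mem_support_iff.mp hb
  have has : (a : Fin (n+1) → F) ∈ s := hsupp a ha
  have hbs : (b : Fin (n+1) → F) ∈ s := hsupp b hb
  -- index types
  have hScard : Fintype.card {p : t // (p : Fin (n+1) → F) ∈ s} = m + 1 := by
    rw [← hscard, Set.toFinset_card]
    exact Fintype.card_congr
      ⟨fun p => ⟨↑↑p, p.2⟩, fun q => ⟨⟨↑q, hst q.2⟩, q.2⟩,
        fun p => by ext; rfl, fun q => by ext; rfl⟩
  have hTccard : Fintype.card {k : t // k ≠ a ∧ k ≠ b} = n + 1 - 2 := by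
    rw [Fintype.card_subtype]
    have he : (Finset.univ.filter fun k : t => k ≠ a ∧ k ≠ b) = Finset.univ \ {a, b} := by
      ext k
      simp [not_or]
    rw [he, Finset.card_sdiff_of_subset (Finset.subset_univ _), Finset.card_univ, htcard,
      Finset.card_insert_of_notMem (by simp [hab]), Finset.card_singleton]
  have hmn : m + 1 ≤ n + 1 := by
    have hci : Fintype.card {p : t // (p : Fin (n+1) → F) ∈ s} ≤ Fintype.card t :=
      Fintype.card_le_of_injective (fun p => p.1) (fun x y h => Subtype.ext h)
    omega
  have hm1 : 1 ≤ m := by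
    have h2 : 1 < Fintype.card {p : t // (p : Fin (n+1) → F) ∈ s} :=
      Fintype.one_lt_card_iff_nontrivial.mpr
        ⟨⟨a, has⟩, ⟨b, hbs⟩, by simp [Subtype.ext_iff, hab]⟩
    omega
  -- linear forms and polynomials
  set L : t → MvPolynomial (Fin (n+1)) F := fun j => linPoly (B.coord j) with hLdef
  have hδ : ∀ (j p : t), B.coord j ((p : Fin (n+1) → F)) = if p = j then 1 else 0 := by
    intro j p
    rw [← hBcoe p, Module.Basis.coord_apply, Module.Basis.repr_self]
    exact Finsupp.single_apply
  set S := {p : t // (p : Fin (n+1) → F) ∈ s} with hSdef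
  set Tc := {k : t // k ≠ a ∧ k ≠ b} with hTcdef
  set poly : (S × t) ⊕ Tc → MvPolynomial (Fin (n+1)) F := fun i =>
    match i with
    | Sum.inl (p, k) => L p.1 ^ (d-1) * L k
    | Sum.inr j => L a ^ (d-2) * (L b * L j.1) with hpolydef
  have hpoly : ∀ i, (poly i).IsHomogeneous d := by
    rintro (⟨p, k⟩ | j)
    · have h1 := ((linPoly_homog (B.coord p.1)).pow (d-1)).mul (linPoly_homog (B.coord k))
      have e : 1 * (d-1) + 1 = d := by omega
      rwa [e] at h1
    · have h1 := ((linPoly_homog (B.coord a)).pow (d-2)).mul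
        ((linPoly_homog (B.coord b)).mul (linPoly_homog (B.coord j.1)))
      have e : 1 * (d-2) + (1+1) = d := by omega
      rwa [e] at h1
  set vfam : (S × t) ⊕ Tc → ({x // x ∈ Z} → F × (Fin (n+1) → F)) :=
    fun i => jetMap F n d Z ⟨poly i, hpoly i⟩ with hvfamdef
  -- points
  set zpt : S → (Fin (n+1) → F) := fun p => (p.1 : Fin (n+1) → F) with hzptdef
  have hzZ : ∀ p : S, zpt p ∈ Z := fun p => by exact_mod_cast hsZ p.2
  set zh : S → {x // x ∈ Z} := fun p => ⟨zpt p, hzZ p⟩ with hzhdef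
  set wh : {x // x ∈ Z} := ⟨w, hwZ⟩ with hwhdef
  -- generic evaluation formulas
  have evalB : ∀ (p : S) (k : t) (z : Fin (n+1) → F),
      aeval z (poly (Sum.inl (p, k))) = (B.coord p.1 z)^(d-1) * B.coord k z := by
    intro p k z
    simp only [hpolydef, map_mul, map_pow, hLdef, aeval_linPoly]
  have jetB : ∀ (p : S) (k : t) (z v : Fin (n+1) → F),
      jet1 z v (poly (Sum.inl (p, k))) =
        ((d-1 : ℕ) * (B.coord p.1 z)^(d-1-1) * B.coord p.1 v) * B.coord k z
        + (B.coord p.1 z)^(d-1) * B.coord k v := by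
    intro p k z v
    simp only [hpolydef, hLdef]
    rw [jet1_mul, jet1_pow, map_pow, aeval_linPoly, aeval_linPoly, jet1_linPoly, jet1_linPoly]
  have evalC : ∀ (j : Tc) (z : Fin (n+1) → F),
      aeval z (poly (Sum.inr j)) = (B.coord a z)^(d-2) * (B.coord b z * B.coord j.1 z) := by
    intro j z
    simp only [hpolydef, map_mul, map_pow, hLdef, aeval_linPoly]
  have jetC : ∀ (j : Tc) (z v : Fin (n+1) → F),
      jet1 z v (poly (Sum.inr j)) =
        ((d-2 : ℕ) * (B.coord a z)^(d-2-1) * B.coord a v) * (B.coord b z * B.coord j.1 z)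
        + (B.coord a z)^(d-2) *
            (B.coord b v * B.coord j.1 z + B.coord b z * B.coord j.1 v) := by
    intro j z v
    simp only [hpolydef, hLdef]
    rw [jet1_mul, jet1_pow, jet1_mul, map_pow, map_mul,
      aeval_linPoly, aeval_linPoly, aeval_linPoly, jet1_linPoly, jet1_linPoly, jet1_linPoly]
  -- entry computations at the chosen points
  have E_entry : ∀ (p : S) (x : S × t),
      aeval (zpt p) (poly (Sum.inl x)) = if x = (p, p.1) then 1 else 0 := by
    intro p x
    rw [evalB, hδ, hδ]
    by_cases h1 : x.1 = p
    · by_cases h2 : x.2 = p.1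
      · have : x = (p, p.1) := Prod.ext h1 h2
        simp [this, one_pow]
      · have : ¬ (x = (p, p.1)) := fun h => h2 (by rw [h])
        simp only [this, if_false]
        rw [if_pos (by rw [h1]), if_neg (fun h => h2 (by rw [← h]))]
        rw [one_pow, mul_zero]
    · have hne : ¬ ((p : t) = x.1.1) := fun h => h1 (Subtype.ext h.symm)
      have : ¬ (x = (p, p.1)) := fun h => h1 (by rw [h])
      simp only [this, if_false, if_neg hne]
      rw [zero_pow hd1, zero_mul]
  have E_entryC : ∀ (p : S) (j : Tc), aeval (zpt p) (poly (Sum.inr j)) = 0 := by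
    intro p j
    rw [evalC, hδ, hδ, hδ]
    by_cases h1 : (p : t) = b
    · have h2 : ¬ ((p : t) = j.1) := fun h => j.2.2 (by rw [← h, h1])
      simp [h2]
    · simp [h1]
  have J_entryB : ∀ (p : S) (q : t), q ≠ p.1 → ∀ x : S × t,
      jet1 (zpt p) (B q) (poly (Sum.inl x)) = if x = (p, q) then 1 else 0 := by
    intro p q hq x
    rw [jetB, hBcoe q, hδ, hδ, hδ, hδ]
    by_cases h1 : (p : t) = x.1.1
    · have hq1 : ¬ (q = x.1.1) := fun h => hq (by rw [← h1] at h; exact h)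
      by_cases h2 : x.2 = q
      · have hx : x = (p, q) := Prod.ext (Subtype.ext h1.symm) h2
        simp [hx, h1, hq1, one_pow]
      · have : ¬ (x = (p, q)) := fun h => h2 (by rw [h])
        have hq2 : ¬ (q = x.2) := fun h => h2 h.symm
        simp [this, h1, hq1, hq2]
    · have : ¬ (x = (p, q)) := fun h => h1 (by rw [h])
      simp only [this, if_false, if_neg h1]
      rw [zero_pow hd11, zero_pow hd1]
      ring
  have J_entryC : ∀ (p : S) (v : Fin (n+1) → F) (j : Tc),
      jet1 (zpt p) v (poly (Sum.inr j)) = 0 := by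
    intro p v j
    rw [jetC, hδ, hδ, hδ]
    by_cases h1 : (p : t) = a
    · have h2 : ¬ ((p : t) = b) := fun h => hab (by rw [← h1, h])
      have h3 : ¬ ((p : t) = j.1) := fun h => j.2.1 (by rw [← h, h1])
      simp [h2, h3]
    · by_cases h2 : (p : t) = b
      · have h3 : ¬ ((p : t) = j.1) := fun h => j.2.2 (by rw [← h, h2])
        simp [h1, h3, zero_pow hd2]
      · simp [h1, h2, zero_pow hd2]
  have Jw_entry : ∀ (q : Tc) (j : Tc),
      jet1 w (B q.1) (poly (Sum.inr j)) = if j = q then (r a)^(d-2) * r b else 0 := by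
    intro q j
    rw [jetC, hBcoe q.1, hδ, hδ, hδ]
    have hca : B.coord a w = r a := by rw [Module.Basis.coord_apply, ← hr]
    have hcb : B.coord b w = r b := by rw [Module.Basis.coord_apply, ← hr]
    rw [hca, hcb]
    have hqa : ¬ ((q : t) = a) := q.2.1
    have hqb : ¬ ((q : t) = b) := q.2.2
    by_cases h : (q : t) = j.1
    · have : j = q := Subtype.ext h.symm
      simp [this, hqa, hqb]
    · have : ¬ (j = q) := fun hh => h (by rw [hh])
      simp [this, hqa, hqb, h]
  -- linear independence
  have hindep : LinearIndependent F vfam := by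
    rw [Fintype.linearIndependent_iff]
    intro g hg
    have key : ∀ (p : S) (q : t), g (Sum.inl (p, q)) = 0 := by
      intro p q
      by_cases hq : q = p.1
      · have h0 := congrArg (muE (zh p)) hg
        rw [map_sum, map_zero, Fintype.sum_sum_type] at h0
        simp only [map_smul, hvfamdef, muE_jet, smul_eq_mul] at h0
        rw [hq]
        simp only [hzhdef, E_entry p, E_entryC p, mul_ite, mul_one, mul_zero,
          Finset.sum_ite_eq', Finset.mem_univ, if_true, Finset.sum_const_zero, add_zero] at h0
        rw [Finset.sum_eq_single (p, p.1) (fun x _ hx => if_neg hx)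
          (fun h => absurd (Finset.mem_univ _) h), if_pos rfl] at h0
        exact h0
      · have h0 := congrArg (muJ (zh p) (B q)) hg
        rw [map_sum, map_zero, Fintype.sum_sum_type] at h0
        simp only [map_smul, hvfamdef, muJ_jet, smul_eq_mul] at h0
        simp only [hzhdef, J_entryB p q hq, J_entryC p, mul_ite, mul_one, mul_zero,
          Finset.sum_ite_eq', Finset.mem_univ, if_true, Finset.sum_const_zero, add_zero] at h0
        rw [Finset.sum_eq_single (p, q) (fun x _ hx => if_neg hx)
          (fun h => absurd (Finset.mem_univ _) h), if_pos rfl] at h0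
        exact h0
    rintro (⟨p, q⟩ | j)
    · exact key p q
    · have h0 := congrArg (muJ wh (B j.1)) hg
      rw [map_sum, map_zero, Fintype.sum_sum_type] at h0
      simp only [map_smul, hvfamdef, muJ_jet, smul_eq_mul] at h0
      have hz1 : ∀ x : S × t,
          g (Sum.inl x) * jet1 (wh : Fin (n+1) → F) (B j.1) (poly (Sum.inl x)) = 0 :=
        fun x => by rw [key x.1 x.2, zero_mul]
      rw [Finset.sum_congr rfl (fun x _ => hz1 x), Finset.sum_const_zero, zero_add] at h0
      simp only [hwhdef, Jw_entry j, mul_ite, mul_zero,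
        Finset.sum_ite_eq', Finset.mem_univ, if_true] at h0
      rw [Finset.sum_eq_single j (fun x _ hx => if_neg hx)
        (fun h => absurd (Finset.mem_univ _) h), if_pos rfl] at h0
      rcases mul_eq_zero.mp h0 with h | h
      · exact h
      · exact absurd h (mul_ne_zero (pow_ne_zero _ hra) hrb)
  -- conclusion
  have hsub : ∀ i, vfam i ∈ LinearMap.range (jetMap F n d Z) := fun i => ⟨_, rfl⟩
  have hspan_le : Submodule.span F (Set.range vfam) ≤ LinearMap.range (jetMap F n d Z) :=
    Submodule.span_le.mpr (Set.range_subset_iff.mpr hsub)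
  have h1 : Module.finrank F (Submodule.span F (Set.range vfam)) =
      Fintype.card ((S × t) ⊕ Tc) := finrank_span_eq_card hindep
  have h2 : Module.finrank F (Submodule.span F (Set.range vfam)) ≤
      Module.finrank F (LinearMap.range (jetMap F n d Z)) :=
    Submodule.finrank_mono hspan_le
  have h3 : Module.finrank F
      (↥(MvPolynomial.homogeneousSubmodule (Fin (n + 1)) F d) ⧸
        LinearMap.ker (jetMap F n d Z)) =
      Module.finrank F (LinearMap.range (jetMap F n d Z)) :=
    LinearEquiv.finrank_eq (LinearMap.quotKerEquivRange _)
  have hcardI : Fintype.card ((S × t) ⊕ Tc) = (m+1) * (n+1) + (n+1-2) := by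
    rw [Fintype.card_sum, Fintype.card_prod, hScard, htcard, hTccard]
  rw [h3]
  have hge : (m+1) * (n+1) + (n+1-2) ≤
      Module.finrank F (LinearMap.range (jetMap F n d Z)) := by
    rw [← hcardI, ← h1]
    exact h2
  have e1 : (m + 1) * (n + 1) + n - 1 = (m+1) * (n+1) + (n+1-2) := by
    have : 1 ≤ n := le_trans hm1 (by omega)
    omega
  omega
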